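/- Let P be an n×n orthogonal projection and X a Hermitian matrix with X = XP + PX (P-codiagonal). Then e^{iX} S_P = S_P e^{−iX}, where S_P = 2P − 1. -/

import Mathlib

open Matrix
open scoped ComplexOrder

noncomputable section

/-- n×n complex matrices -/
abbrev Mat (n : ℕ) := Matrix (Fin n) (Fin n) ℂ

/-- the former `Matrix.PosSemidef.sqrt` (removed from Mathlib), with its old definition -/
noncomputable def psdSqrtOld {n : ℕ} {A : Mat n} (hA : A.PosSemidef) : Mat n :=
  hA.1.eigenvectorUnitary.1 * diagonal ((↑) ∘ Real.sqrt ∘ hA.1.eigenvalues) *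
    (star hA.1.eigenvectorUnitary : Mat n)

theorem psdSqrtOld_isHermitian {n : ℕ} {A : Mat n} (hA : A.PosSemidef) :
    (psdSqrtOld hA).IsHermitian := by
  have hD : (diagonal (((↑) ∘ Real.sqrt ∘ hA.1.eigenvalues) : Fin n → ℂ)).IsHermitian :=
    isHermitian_diagonal_of_self_adjoint _ (by ext i; simp)
  exact isHermitian_mul_mul_conjTranspose (hA.1.eigenvectorUnitary : Mat n) hD

/-- modulus |A| = sqrt (Aᴴ A) -/
noncomputable def matAbs {n : ℕ} (A : Mat n) : Mat n :=
  psdSqrtOld (Matrix.posSemidef_conjTranspose_mul_self A)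

/-- spectral (operator) norm -/
noncomputable def specNorm {n : ℕ} (A : Mat n) : ℝ :=
  ‖Matrix.toEuclideanCLM (𝕜 := ℂ) (n := Fin n) A‖

/-- Löwner order: `A ≤ B` iff `B - A` is positive semidefinite -/
def loewnerLE {n : ℕ} (A B : Mat n) : Prop := (B - A).PosSemidef

/-- singular values of `A`, arranged in non-increasing order -/
noncomputable def sval {n : ℕ} (A : Mat n) : Fin n → ℝ :=
  fun i =>
    let e := (psdSqrtOld_isHermitian (Matrix.posSemidef_conjTranspose_mul_self A)).eigenvalues
    (e ∘ Tuple.sort e) i.rev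

/-- singular values indexed by naturals (0 beyond the size) -/
noncomputable def svalNat {n : ℕ} (A : Mat n) (k : ℕ) : ℝ :=
  if h : k < n then sval A ⟨k, h⟩ else 0

/-- eigenvalues of a Hermitian matrix, arranged in non-increasing order -/
noncomputable def eigsDesc {n : ℕ} {A : Mat n} (hA : A.IsHermitian) : Fin n → ℝ :=
  fun i => (hA.eigenvalues ∘ Tuple.sort hA.eigenvalues) i.rev

theorem stmt13 {n : ℕ} (P X : Mat n) (hP : P.IsHermitian) (hP2 : P * P = P)
    (hX : X.IsHermitian) (hcod : X = X * P + P * X) :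
    NormedSpace.exp (Complex.I • X) * ((2 : ℂ) • P - 1)
      = ((2 : ℂ) • P - 1) * NormedSpace.exp (-(Complex.I • X)) := by
  set S : Mat n := (2 : ℂ) • P - 1 with hS
  have hSS : S * S = 1 := by
    have h1 : S * S = (4 : ℂ) • (P * P) - (2 : ℂ) • P - (2 : ℂ) • P + 1 := by
      rw [hS]; noncomm_ring <;> module
    rw [h1, hP2]; module
  have hPXP : P * X * P = 0 := by
    have h := congrArg (fun Y => P * Y) hcod
    simp only [mul_add, ← mul_assoc, hP2] at h
    rwa [right_eq_add] at h
  have hSXS : S * (Complex.I • X) * S = -(Complex.I • X) := by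
    have h1 : S * X * S = (4 : ℂ) • (P * X * P) - (2 : ℂ) • (P * X) - (2 : ℂ) • (X * P) + X := by
      rw [hS]; noncomm_ring <;> module
    have h2 : S * X * S = -X := by
      have h1' : S * X * S = X - (2 : ℂ) • (X * P + P * X) := by
        rw [h1, hPXP]; module
      rw [h1', ← hcod]; module
    calc S * (Complex.I • X) * S = Complex.I • (S * X * S) := by
          rw [mul_smul_comm, smul_mul_assoc]
      _ = -(Complex.I • X) := by rw [h2, smul_neg]
  have hU : IsUnit S := ⟨⟨S, S, hSS, hSS⟩, rfl⟩
  have hinv : S⁻¹ = S := Matrix.inv_eq_left_inv hSS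
  have hc := Matrix.exp_conj S (Complex.I • X) hU
  rw [hinv, hSXS] at hc
  have := congrArg (fun Y => S * Y) hc
  simp only [← mul_assoc, hSS, one_mul] at this
  exact this.symm


end
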